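/- For every natural number n, the determinant of the (n+1)×(n+1) matrix whose (i,j) entry is r_{i+j} (for 0 ≤ i, j ≤ n) equals (−1)^{binomial(n+1,2)}, i.e., (−1)^{n(n+1)/2}. -/

import Mathlib

open scoped Classical

/-- The Rueppel sequence: `r_n = 1` if `n = 2^k - 1` for some `k ≥ 0`, else `0`. -/
noncomputable def rueppelSeq (n : ℕ) : ℤ :=
  if ∃ k : ℕ, n = 2 ^ k - 1 then 1 else 0

open Matrix Finset Equiv

section Rev

def revInterval (N a b : ℕ) : Equiv.Perm (Fin N) :=
  Function.Involutive.toPerm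
    (fun j => if _h : a ≤ (j : ℕ) ∧ (j : ℕ) < a + 2 * b ∧ a + 2 * b ≤ N then
        ⟨2 * a + 2 * b - 1 - (j : ℕ), by omega⟩ else j)
    (by
      intro j
      dsimp only
      by_cases h : a ≤ (j : ℕ) ∧ (j : ℕ) < a + 2 * b ∧ a + 2 * b ≤ N
      · rw [dif_pos h, dif_pos (by simp; omega)]
        apply Fin.ext; simp; omega
      · rw [dif_neg h, dif_neg h])

lemma revInterval_apply (N a b : ℕ) (j : Fin N) :
    ((revInterval N a b j : Fin N) : ℕ) =
      if a ≤ (j : ℕ) ∧ (j : ℕ) < a + 2 * b ∧ a + 2 * b ≤ N then 2 * a + 2 * b - 1 - (j : ℕ)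
      else j := by
  show ((if _h : a ≤ (j : ℕ) ∧ (j : ℕ) < a + 2 * b ∧ a + 2 * b ≤ N then
      (⟨2 * a + 2 * b - 1 - (j : ℕ), by omega⟩ : Fin N) else j : Fin N) : ℕ) = _
  split_ifs with h <;> rfl

lemma revInterval_sign (N : ℕ) : ∀ b a : ℕ, a + 2 * b ≤ N →
    Equiv.Perm.sign (revInterval N a b) = (-1) ^ b := by
  intro b
  induction b with
  | zero =>
    intro a _
    have : revInterval N a 0 = 1 := by
      ext j
      rw [revInterval_apply]
      simp only [Equiv.Perm.coe_one, id_eq]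
      split_ifs with h
      · omega
      · rfl
    rw [this]; simp
  | succ b ih =>
    intro a h
    have key : revInterval N a (b + 1) =
        Equiv.swap (⟨a, by omega⟩ : Fin N) ⟨a + 2 * b + 1, by omega⟩ * revInterval N (a + 1) b := by
      ext j
      have hj := j.isLt
      have hk := revInterval_apply N (a + 1) b j
      rw [Equiv.Perm.mul_apply, revInterval_apply, Equiv.swap_apply_def]
      split_ifs at hk ⊢ <;> simp_all [Fin.ext_iff] <;> omega
    rw [key, Equiv.Perm.sign_mul, Equiv.Perm.sign_swap (by simp [Fin.ext_iff]; omega),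
      ih (a + 1) (by omega)]
    rw [pow_succ]; exact (mul_comm _ _)

end Rev

lemma rueppel_window {t : ℕ} (n : ℕ) (h1 : 2 ^ t < n + 1) (h2 : n + 1 < 2 ^ (t + 2)) :
    rueppelSeq n = if n + 1 = 2 ^ (t + 1) then 1 else 0 := by
  unfold rueppelSeq
  by_cases h : n + 1 = 2 ^ (t + 1)
  · rw [if_pos h, if_pos ⟨t + 1, by omega⟩]
  · rw [if_neg h, if_neg]
    rintro ⟨k, hk⟩
    have hpos : 0 < 2 ^ k := Nat.two_pow_pos k
    have hk' : n + 1 = 2 ^ k := by omega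
    have l1 : t < k := (Nat.pow_lt_pow_iff_right (by norm_num : 1 < 2)).mp (by omega)
    have l2 : k < t + 2 := (Nat.pow_lt_pow_iff_right (by norm_num : 1 < 2)).mp (by omega)
    have : k = t + 1 := by omega
    subst this
    exact h hk'

lemma neg_one_pow_congr' {a c : ℕ} (h : a % 2 = c % 2) : (-1 : ℤ) ^ a = (-1) ^ c := by
  rw [← Nat.div_add_mod a 2, ← Nat.div_add_mod c 2, pow_add, pow_add, pow_mul, pow_mul]
  norm_num [h]

lemma key_arith (s b N : ℕ) (hb : N = s + 2 * b) (hN : 1 ≤ N) :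
    N * (N - 1) + 2 * b = s * (s - 1) + 4 * (b * s) + 4 * (b * b) := by
  subst hb
  cases s with
  | zero =>
    cases b with
    | zero => omega
    | succ b' =>
      have h3 : 0 + 2 * (b' + 1) - 1 = 2 * b' + 1 := by omega
      rw [h3]
      simp only [Nat.zero_sub, Nat.mul_zero, Nat.zero_mul]
      ring
  | succ s' =>
    have h4 : s' + 1 - 1 = s' := rfl
    have h5 : s' + 1 + 2 * b - 1 = s' + 2 * b := by omega
    rw [h4, h5]
    ring

lemma hankel_det : ∀ N : ℕ,
    (Matrix.of fun i j : Fin N => rueppelSeq (i.1 + j.1)).det = (-1 : ℤ) ^ (N * (N - 1) / 2) := by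
  intro N
  induction N using Nat.strong_induction_on with
  | _ N ih =>
  rcases Nat.lt_or_ge N 2 with hN | hN
  · interval_cases N
    · simp
    · rw [Matrix.det_fin_one]
      have h0 : rueppelSeq 0 = 1 := if_pos ⟨0, rfl⟩
      simp [h0]
  -- main case, N ≥ 2
  set t := Nat.log 2 (N - 1) with ht
  set q := 2 ^ t with hqdef
  have hq1 : 1 ≤ q := Nat.one_le_two_pow
  have hqN : q < N := lt_of_le_of_lt (Nat.pow_log_le_self 2 (by omega)) (by omega)
  have hNq : N ≤ 2 * q := by
    have h1 : N - 1 < 2 ^ (t + 1) := Nat.lt_pow_succ_log_self (by norm_num) (N - 1)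
    have h2 : (2:ℕ) ^ (t + 1) = 2 * q := by rw [pow_succ]; ring
    omega
  set P := 2 * q with hPdef
  set s := P - N with hsdef
  have hs : s + N = P := by omega
  have hsq : s < q := by omega
  obtain ⟨b, hb⟩ : ∃ b, N = s + 2 * b := ⟨N - q, by omega⟩
  set A : Matrix (Fin N) (Fin N) ℤ := Matrix.of fun i j : Fin N => rueppelSeq (i.1 + j.1) with hA
  have factA : ∀ i j : Fin N, q < i.1 + j.1 + 1 →
      A i j = if i.1 + j.1 = P - 1 then 1 else 0 := by
    intro i j hgt
    have hi := i.isLt; have hj := j.isLt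
    have h4q : (2:ℕ) ^ (t + 2) = 4 * q := by rw [pow_succ, pow_succ]; ring
    have hw := rueppel_window (t := t) (i.1 + j.1) (by omega) (by omega)
    have h21 : (2:ℕ) ^ (t + 1) = P := by rw [pow_succ]; ring
    rw [hA]; simp only [Matrix.of_apply]; rw [hw]
    split_ifs <;> first | rfl | omega
  set F : Matrix (Fin N) (Fin N) ℤ := Matrix.of (fun i j : Fin N =>
      if i.1 < q ∧ q ≤ j.1 then rueppelSeq (i.1 + (P - 1 - j.1)) else 0) with hF
  set E := (1 : Matrix (Fin N) (Fin N) ℤ) - F with hE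
  have hEtri : E.BlockTriangular id := by
    intro i j hji
    have hji' : j.1 < i.1 := hji
    rw [hE]
    simp only [Matrix.sub_apply, Matrix.one_apply, hF, Matrix.of_apply]
    rw [if_neg (by rw [Fin.ext_iff]; omega), if_neg (by omega)]
    ring
  have hEdet : E.det = 1 := by
    rw [Matrix.det_of_upperTriangular hEtri]
    apply Finset.prod_eq_one; intro i _
    rw [hE]
    simp only [Matrix.sub_apply, Matrix.one_apply_eq, hF, Matrix.of_apply]
    rw [if_neg (by omega)]
    ring
  have hFA : ∀ i j : Fin N, (F * A) i j =
      if i.1 < q ∧ s ≤ j.1 ∧ j.1 < q then rueppelSeq (i.1 + j.1) else 0 := by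
    intro i j
    have hi := i.isLt; have hj := j.isLt
    rw [Matrix.mul_apply]
    by_cases hiq : i.1 < q
    · by_cases hjs : s ≤ j.1 ∧ j.1 < q
      · rw [if_pos ⟨hiq, hjs⟩]
        have hk0lt : P - 1 - j.1 < N := by omega
        rw [Finset.sum_eq_single (⟨P - 1 - j.1, hk0lt⟩ : Fin N)]
        · rw [hF]
          simp only [Matrix.of_apply]
          rw [if_pos ⟨hiq, by show q ≤ P - 1 - j.1; omega⟩]
          rw [factA ⟨P - 1 - j.1, hk0lt⟩ j (by simp; omega)]
          rw [if_pos (by simp; omega)]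
          rw [mul_one]
          congr 1
          simp; omega
        · intro k _ hkne
          have hkj := k.isLt
          by_cases hkq : q ≤ k.1
          · rw [factA k j (by omega), if_neg (by
              intro hcon
              apply hkne
              rw [Fin.ext_iff]
              simp; omega)]
            exact mul_zero _
          · rw [hF]
            simp only [Matrix.of_apply]
            rw [if_neg (by tauto)]
            exact zero_mul _
        · intro hcon
          exact absurd (Finset.mem_univ _) hcon
      · rw [if_neg (by tauto)]
        apply Finset.sum_eq_zero
        intro k _
        have hk := k.isLt
        by_cases hkq : q ≤ k.1
        · rw [factA k j (by omega), if_neg (by omega)]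
          exact mul_zero _
        · rw [hF]
          simp only [Matrix.of_apply]
          rw [if_neg (by tauto)]
          exact zero_mul _
    · rw [if_neg (by tauto)]
      apply Finset.sum_eq_zero
      intro k _
      rw [hF]
      simp only [Matrix.of_apply]
      rw [if_neg (by tauto)]
      exact zero_mul _
  have hM : ∀ i j : Fin N, (E * A) i j =
      if j.1 < s then (if i.1 < q then rueppelSeq (i.1 + j.1) else 0)
      else (if i.1 + j.1 = P - 1 then 1 else 0) := by
    intro i j
    have hi := i.isLt; have hj := j.isLt
    rw [hE, Matrix.sub_mul, Matrix.one_mul, Matrix.sub_apply, hFA]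
    by_cases h1 : j.1 < s
    · rw [if_pos h1, if_neg (by omega)]
      by_cases h2 : i.1 < q
      · rw [if_pos h2, sub_zero]; rfl
      · rw [if_neg h2, sub_zero, factA i j (by omega), if_neg (by omega)]
    · rw [if_neg h1]
      by_cases h2 : j.1 < q
      · by_cases h3 : i.1 < q
        · rw [if_pos ⟨h3, by omega, h2⟩, if_neg (by omega)]
          have : A i j = rueppelSeq (i.1 + j.1) := rfl
          rw [this, sub_self]
        · rw [if_neg (by tauto), sub_zero, factA i j (by omega)]
      · rw [if_neg (by omega), sub_zero, factA i j (by omega)]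
  have hsb : s + 2 * b = N := by omega
  set τ := revInterval N s b with hτdef
  have happ : ∀ j : Fin N, ((τ j : Fin N) : ℕ) = if s ≤ j.1 then 2 * s + 2 * b - 1 - j.1 else j.1 := by
    intro j
    have hj := j.isLt
    rw [hτdef, revInterval_apply]
    split_ifs <;> first | rfl | omega
  set M' := (E * A).submatrix id τ with hM'def
  have hM' : ∀ i j : Fin N, M' i j =
      if j.1 < s then (if i.1 < q then rueppelSeq (i.1 + j.1) else 0)
      else (if i.1 = j.1 then 1 else 0) := by
    intro i j
    have hi := i.isLt; have hj := j.isLt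
    rw [hM'def, Matrix.submatrix_apply, id_eq, hM i (τ j)]
    have ht := happ j
    by_cases h1 : j.1 < s
    · have hv : ((τ j : Fin N) : ℕ) = j.1 := by rw [ht, if_neg (by omega)]
      rw [hv, if_pos h1, if_pos h1]
    · have hv : ((τ j : Fin N) : ℕ) = 2 * s + 2 * b - 1 - j.1 := by rw [ht, if_pos (by omega)]
      rw [if_neg (by omega), if_neg h1]
      have hiff : i.1 + ((τ j : Fin N) : ℕ) = P - 1 ↔ i.1 = j.1 := by rw [hv]; omega
      rw [if_congr hiff rfl rfl]
  set e : Fin s ⊕ Fin (2 * b) ≃ Fin N := finSumFinEquiv.trans (finCongr hsb) with hedef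
  have hval_l : ∀ i : Fin s, ((e (Sum.inl i) : Fin N) : ℕ) = i.1 := by
    intro i; simp [hedef]
  have hval_r : ∀ i : Fin (2 * b), ((e (Sum.inr i) : Fin N) : ℕ) = s + i.1 := by
    intro i; simp [hedef]
  have hblock : (M'.submatrix e e) =
      Matrix.fromBlocks (Matrix.of fun i j : Fin s => rueppelSeq (i.1 + j.1)) 0
        ((M'.submatrix e e).toBlocks₂₁) 1 := by
    ext i j
    rcases i with i | i <;> rcases j with j | j
    · simp only [Matrix.submatrix_apply, Matrix.fromBlocks_apply₁₁, Matrix.of_apply]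
      rw [hM' _ _, if_pos (by rw [hval_l]; exact j.isLt), if_pos (by rw [hval_l]; omega),
        hval_l, hval_l]
    · simp only [Matrix.submatrix_apply, Matrix.fromBlocks_apply₁₂, Matrix.zero_apply]
      rw [hM' _ _, if_neg (by rw [hval_r]; omega), if_neg (by rw [hval_l, hval_r]; omega)]
    · simp only [Matrix.fromBlocks_apply₂₁, Matrix.toBlocks₂₁, Matrix.submatrix_apply,
        Matrix.of_apply]
    · simp only [Matrix.submatrix_apply, Matrix.fromBlocks_apply₂₂, Matrix.one_apply]
      rw [hM' _ _, if_neg (by rw [hval_r]; omega)]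
      have : ((e (Sum.inr i) : Fin N) : ℕ) = ((e (Sum.inr j) : Fin N) : ℕ) ↔ i = j := by
        rw [hval_r, hval_r, Fin.ext_iff]; omega
      rw [if_congr this rfl rfl]
  have dA : A.det = (E * A).det := by rw [Matrix.det_mul, hEdet, one_mul]
  have hsign : ((Equiv.Perm.sign τ : ℤˣ) : ℤ) = (-1) ^ b := by
    have hsgn := revInterval_sign N b s (by omega)
    rw [hτdef, hsgn]
    push_cast
    ring
  have dM' : M'.det = (-1 : ℤ) ^ b * (E * A).det := by
    rw [hM'def, Matrix.det_permute' τ (E * A), hsign]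
    push_cast
    ring
  have dblock : M'.det = (Matrix.of fun i j : Fin s => rueppelSeq (i.1 + j.1)).det := by
    rw [← Matrix.det_submatrix_equiv_self e M', hblock, Matrix.det_fromBlocks_zero₁₂,
      Matrix.det_one, mul_one]
  have ihs := ih s (by omega)
  have hEA : (E * A).det = (-1 : ℤ) ^ b * M'.det := by
    rw [dM', ← mul_assoc, ← pow_add]
    have hev : Even (b + b) := ⟨b, rfl⟩
    rw [hev.neg_one_pow, one_mul]
  rw [dA, hEA, dblock, ihs, ← pow_add]
  apply neg_one_pow_congr'
  -- parity bookkeeping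
  have h2s : 2 ∣ s * (s - 1) := by
    rcases Nat.eq_zero_or_pos s with h | h
    · simp [h]
    · have hev := Nat.even_mul_succ_self (s - 1)
      have hs1 : s - 1 + 1 = s := by omega
      rw [hs1] at hev
      rw [mul_comm]
      exact hev.two_dvd
  have h2N : 2 ∣ N * (N - 1) := by
    have hev := Nat.even_mul_succ_self (N - 1)
    have hN1 : N - 1 + 1 = N := by omega
    rw [hN1] at hev
    rw [mul_comm]
    exact hev.two_dvd
  have key : N * (N - 1) + 2 * b = s * (s - 1) + 4 * (b * s) + 4 * (b * b) :=
    key_arith s b N hb (by omega)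
  set X := N * (N - 1) with hX
  set Y := s * (s - 1) with hY
  set Z := b * s with hZ
  set W := b * b with hW
  clear_value X Y Z W
  omega

/-- The Hankel transform of the Rueppel sequence is `(-1)^(binomial(n+1, 2))`. -/
theorem rueppel_hankel_transform (n : ℕ) :
    Matrix.det (Matrix.of fun i j : Fin (n + 1) => rueppelSeq (i.1 + j.1)) =
      (-1 : ℤ) ^ Nat.choose (n + 1) 2 := by
  have h := hankel_det (n + 1)
  rw [h, Nat.choose_two_right]
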